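/- For h ≥ 2, let M(h) be the set of pairs (s,t) with s = liminf_{n→∞} g_𝓑(n) and t = limsup_{n→∞} g_𝓑(n) for some asymptotic multiplicative system 𝓑 = (B_1,...,B_h) of order h. Then M(h) = {(1,t) : t ∈ ℕ ∪ {∞}} ∪ {(s,∞) : s ∈ {2,...,h}}. -/

import Mathlib

open Filter
namespace Nath

theorem infinite_ramsey {κ : Type} [Finite κ] :
    ∀ (r : ℕ) (C : Finset ℕ → κ) (S : Set ℕ), S.Infinite →
      ∃ T : Set ℕ, T ⊆ S ∧ T.Infinite ∧ ∃ v : κ,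
        ∀ F : Finset ℕ, ↑F ⊆ T → F.card = r → C F = v := by
  intro r
  induction r with
  | zero =>
    intro C S hS
    exact ⟨S, subset_rfl, hS, C ∅, fun F _ hF => by rw [Finset.card_eq_zero.mp hF]⟩
  | succ r IH =>
    intro C S hS
    have step : ∀ A : Set ℕ, A.Infinite → ∃ (a : ℕ) (A' : Set ℕ) (v : κ),
        a ∈ A ∧ A' ⊆ A ∧ A'.Infinite ∧ (∀ x ∈ A', a < x) ∧
        ∀ F : Finset ℕ, ↑F ⊆ A' → F.card = r → C (insert a F) = v := by
      intro A hA
      obtain ⟨a, ha⟩ := hA.nonempty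
      have hA' : (A \ Set.Iic a).Infinite := hA.diff (Set.finite_Iic a)
      obtain ⟨T, hTsub, hTinf, v, hv⟩ := IH (fun F => C (insert a F)) _ hA'
      exact ⟨a, T, v, ha, fun x hx => (hTsub hx).1, hTinf,
        fun x hx => lt_of_not_ge fun hle => (hTsub hx).2 hle, hv⟩
    choose a A' v ha hsub hinf hlt hcol using step
    set ch : ℕ → {A : Set ℕ // A.Infinite} := fun n =>
      Nat.rec ⟨S, hS⟩ (fun _ p => ⟨A' p.1 p.2, hinf p.1 p.2⟩) n with hch
    have chsucc : ∀ n, (ch (n+1)).1 = A' (ch n).1 (ch n).2 := fun n => rfl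
    have chmono : ∀ n, (ch (n+1)).1 ⊆ (ch n).1 := fun n => by
      rw [chsucc]; exact hsub _ _
    have chmono' : ∀ m n, m ≤ n → (ch n).1 ⊆ (ch m).1 := by
      intro m n hmn
      induction hmn with
      | refl => exact subset_rfl
      | step _ ih => exact fun x hx => ih (chmono _ hx)
    have chS : ∀ n, (ch n).1 ⊆ S := fun n => chmono' 0 n (Nat.zero_le n)
    set aseq : ℕ → ℕ := fun n => a (ch n).1 (ch n).2 with haseq
    set vseq : ℕ → κ := fun n => v (ch n).1 (ch n).2 with hvseq
    have hamem : ∀ n, aseq n ∈ (ch n).1 := fun n => ha _ _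
    have hstrict : StrictMono aseq := strictMono_nat_of_lt_succ (fun n => by
      have : aseq (n+1) ∈ (ch (n+1)).1 := hamem (n+1)
      rw [chsucc] at this
      exact hlt _ _ _ this)
    have pig : ∃ u : κ, {n : ℕ | vseq n = u}.Infinite := by
      by_contra hcon
      push_neg at hcon
      have : (Set.univ : Set ℕ).Finite := by
        have : (Set.univ : Set ℕ) ⊆ ⋃ u : κ, {n : ℕ | vseq n = u} := by
          intro n _
          exact Set.mem_iUnion.mpr ⟨vseq n, rfl⟩
        exact Set.Finite.subset (Set.finite_iUnion (fun u => hcon u)) this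
      exact Set.infinite_univ this
    obtain ⟨u, hI⟩ := pig
    refine ⟨aseq '' {n : ℕ | vseq n = u}, ?_, hI.image (hstrict.injective.injOn), u, ?_⟩
    · rintro x ⟨n, _, rfl⟩
      exact chS n (hamem n)
    · intro F hF hcard
      have hne : F.Nonempty := Finset.card_pos.mp (by omega)
      obtain ⟨n, hnI, hx₀⟩ := hF (F.min'_mem hne)
      have herase : ↑(F.erase (F.min' hne)) ⊆ (ch (n+1)).1 := by
        intro y hy
        simp only [Finset.coe_erase, Set.mem_diff, Set.mem_singleton_iff] at hy
        obtain ⟨m, _, hym⟩ := hF hy.1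
        have hlt' : aseq n < aseq m := by
          rw [hx₀, hym]
          refine lt_of_le_of_ne (F.min'_le _ hy.1) (fun hc => hy.2 ?_)
          exact hc.symm
        have hnm : n + 1 ≤ m := hstrict.lt_iff_lt.mp hlt'
        rw [← hym]
        exact chmono' (n+1) m hnm (hamem m)
      have hcard' : (F.erase (F.min' hne)).card = r := by
        rw [Finset.card_erase_of_mem (F.min'_mem hne), hcard]; omega
      have := hcol (ch n).1 (ch n).2 (F.erase (F.min' hne)) (by rw [← chsucc]; exact herase) hcard'
      rw [show a (ch n).1 (ch n).2 = aseq n from rfl, hx₀,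
        Finset.insert_erase (F.min'_mem hne)] at this
      rw [this]
      exact hnI






variable {h : ℕ}

def repSet (B : Fin h → Set ℕ) (n : ℕ) : Set (Fin h → ℕ) :=
  {b : Fin h → ℕ | (∀ i, b i ∈ B i) ∧ ∏ i, b i = n}

lemma repSet_finite (B : Fin h → Set ℕ) (hpos : ∀ i, ∀ b ∈ B i, 0 < b) (n : ℕ) :
    (repSet B n).Finite := by
  rcases Nat.eq_zero_or_pos n with rfl | hn
  · convert Set.finite_empty
    ext b
    simp only [repSet, Set.mem_setOf_eq, Set.mem_empty_iff_false, iff_false, not_and]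
    intro hb hprod
    have : 0 < ∏ i, b i := Finset.prod_pos (fun i _ => hpos i _ (hb i))
    omega
  · apply Set.Finite.subset (Set.Finite.pi (fun _ : Fin h => Set.finite_Iic n))
    rintro b ⟨hb, hprod⟩
    intro i _
    have hdvd : b i ∣ n := hprod ▸ Finset.dvd_prod_of_mem b (Finset.mem_univ i)
    exact Nat.le_of_dvd hn hdvd

lemma le_ncard_of_inj {α : Type*} [DecidableEq α] {S : Set α} (hS : S.Finite) {k : ℕ} (f : Fin k → α)
    (hf : ∀ j, f j ∈ S) (hinj : Function.Injective f) : k ≤ S.ncard := by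
  have h1 : Set.range f = ↑((Finset.univ : Finset (Fin k)).image f) := by
    ext x; simp
  have h2 : (Set.range f).ncard = k := by
    rw [h1, Set.ncard_coe_finset, Finset.card_image_of_injective _ hinj, Finset.card_univ,
      Fintype.card_fin]
  calc k = (Set.range f).ncard := h2.symm
    _ ≤ S.ncard := Set.ncard_le_ncard (by rintro x ⟨j, rfl⟩; exact hf j) hS

lemma ncard_le_of_inj {α : Type*} {S : Set α} {k : ℕ} (f : α → ℕ)
    (hmap : ∀ b ∈ S, f b < k) (hinj : Set.InjOn f S) : S.ncard ≤ k := by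
  have := Set.ncard_le_ncard_of_injOn f (t := ↑(Finset.range k))
    (fun b hb => by simpa using hmap b hb) hinj (Finset.finite_toSet _)
  rwa [Set.ncard_coe_finset, Finset.card_range] at this

/-- tuple with value x at i, y at j, 1 elsewhere -/
def pair (i j : Fin h) (x y : ℕ) : Fin h → ℕ :=
  fun c => if c = i then x else if c = j then y else 1

lemma pair_apply_left {i j : Fin h} {x y : ℕ} : pair i j x y i = x := by simp [pair]

lemma pair_apply_right {i j : Fin h} (hij : i ≠ j) {x y : ℕ} : pair i j x y j = y := by
  simp [pair, hij.symm]

lemma pair_apply_other {i j c : Fin h} (hci : c ≠ i) (hcj : c ≠ j) {x y : ℕ} :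
    pair i j x y c = 1 := by simp [pair, hci, hcj]

lemma prod_pair {i j : Fin h} (hij : i ≠ j) (x y : ℕ) : ∏ c, pair i j x y c = x * y := by
  rw [← Finset.mul_prod_erase _ _ (Finset.mem_univ i), pair_apply_left,
    ← Finset.mul_prod_erase _ _ (Finset.mem_erase.mpr ⟨hij.symm, Finset.mem_univ j⟩),
    pair_apply_right hij]
  rw [Finset.prod_eq_one, mul_one]
  intro c hc
  simp only [Finset.mem_erase] at hc
  exact pair_apply_other hc.2.1 hc.1

/-- tuple with value x at i, 1 elsewhere -/
def single (i : Fin h) (x : ℕ) : Fin h → ℕ := fun c => if c = i then x else 1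

lemma single_apply_self {i : Fin h} {x : ℕ} : single i x i = x := by simp [single]

lemma single_apply_other {i c : Fin h} (hc : c ≠ i) {x : ℕ} : single i x c = 1 := by
  simp [single, hc]

lemma prod_single {i : Fin h} (x : ℕ) : ∏ c, single i x c = x := by
  simp [single, Finset.prod_ite_eq' Finset.univ i (fun _ => x)]

lemma prod_eq_single_of {b : Fin h → ℕ} {i : Fin h} (hb : ∀ c, c ≠ i → b c = 1) :
    ∏ c, b c = b i := by
  rw [← Finset.mul_prod_erase _ _ (Finset.mem_univ i), Finset.prod_eq_one, mul_one]
  intro c hc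
  exact hb c (Finset.mem_erase.mp hc).1

lemma prod_eq_pair_of {b : Fin h → ℕ} {i j : Fin h} (hij : i ≠ j)
    (hb : ∀ c, c ≠ i → c ≠ j → b c = 1) : ∏ c, b c = b i * b j := by
  rw [← Finset.mul_prod_erase _ _ (Finset.mem_univ i),
    ← Finset.mul_prod_erase _ _ (Finset.mem_erase.mpr ⟨hij.symm, Finset.mem_univ j⟩),
    Finset.prod_eq_one, mul_one]
  intro c hc
  simp only [Finset.mem_erase] at hc
  exact hb c hc.2.1 hc.1



section
variable {h : ℕ}

lemma dvd_prod_primes : ∀ (F : Finset ℕ), (∀ p ∈ F, Nat.Prime p) → ∀ d : ℕ,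
    d ∣ ∏ p ∈ F, p → ∃ G ⊆ F, d = ∏ p ∈ G, p := by
  intro F
  induction F using Finset.induction_on with
  | empty =>
    intro _ d hd
    simp only [Finset.prod_empty, Nat.dvd_one] at hd
    exact ⟨∅, Finset.Subset.refl _, by simp [hd]⟩
  | insert _ _ ha =>
    rename_i a F' IH
    intro hp d hd
    rw [Finset.prod_insert ha] at hd
    have hap : Nat.Prime a := hp a (Finset.mem_insert_self a F')
    by_cases had : a ∣ d
    · obtain ⟨d', rfl⟩ := had
      have hd' : d' ∣ ∏ p ∈ F', p :=
        (mul_dvd_mul_iff_left (a := a) (by exact_mod_cast hap.pos.ne')).mp hd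
      obtain ⟨G', hG'sub, hG'⟩ := IH (fun p hp' => hp p (Finset.mem_insert_of_mem hp')) d' hd'
      refine ⟨insert a G', Finset.insert_subset_insert a hG'sub, ?_⟩
      rw [Finset.prod_insert (fun hc => ha (hG'sub hc)), hG']
    · have hcop : d.Coprime a := (hap.coprime_iff_not_dvd.mpr had).symm
      obtain ⟨G', hG'sub, hG'⟩ := IH (fun p hp' => hp p (Finset.mem_insert_of_mem hp')) d
        (hcop.dvd_of_dvd_mul_left hd)
      exact ⟨G', hG'sub.trans (Finset.subset_insert a F'), hG'⟩

lemma rep_of_prime {B : Fin h → Set ℕ} {p : ℕ} (hp : p.Prime) {b : Fin h → ℕ}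
    (hb : b ∈ repSet B p) : ∃ i, b i = p ∧ ∀ j, j ≠ i → b j = 1 := by
  obtain ⟨hmem, hprod⟩ := hb
  have hdvd : ∀ j, b j ∣ p := fun j => hprod ▸ Finset.dvd_prod_of_mem b (Finset.mem_univ j)
  have hcases : ∀ j, b j = 1 ∨ b j = p := fun j => (Nat.dvd_prime hp).mp (hdvd j)
  by_cases hex : ∃ i, b i = p
  · obtain ⟨i, hi⟩ := hex
    refine ⟨i, hi, fun j hj => ?_⟩
    have h1 : b i * ∏ c ∈ Finset.univ.erase i, b c = p := by
      rw [Finset.mul_prod_erase _ _ (Finset.mem_univ i), hprod]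
    rw [hi] at h1
    have h2 : ∏ c ∈ Finset.univ.erase i, b c = 1 := by
      have hp0 : p ≠ 0 := hp.pos.ne'
      nlinarith [hp.pos]
    have : b j ∣ ∏ c ∈ Finset.univ.erase i, b c :=
      Finset.dvd_prod_of_mem b (Finset.mem_erase.mpr ⟨hj, Finset.mem_univ j⟩)
    rw [h2] at this
    exact Nat.dvd_one.mp this
  · exfalso
    push_neg at hex
    have : ∀ j, b j = 1 := fun j => (hcases j).resolve_right (hex j)
    rw [Finset.prod_congr rfl (fun j _ => this j), Finset.prod_const_one] at hprod
    exact hp.one_lt.ne' hprod.symm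

lemma prime_structure {B : Fin h → Set ℕ} (hpos : ∀ i, ∀ b ∈ B i, 0 < b) {p : ℕ}
    (hp : p.Prime) (h2 : 2 ≤ (repSet B p).ncard) :
    (∀ c, 1 ∈ B c) ∧ ∃ i i', i ≠ i' ∧ p ∈ B i ∧ p ∈ B i' := by
  have hfin := repSet_finite B hpos p
  obtain ⟨b, b', hbmem, hb'mem, hne⟩ := (Set.one_lt_ncard_iff hfin).mp (by omega)
  obtain ⟨i, hbi, hbo⟩ := rep_of_prime hp hbmem
  obtain ⟨i', hbi', hbo'⟩ := rep_of_prime hp hb'mem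
  have hii' : i ≠ i' := by
    rintro rfl
    apply hne
    funext j
    by_cases hj : j = i
    · rw [hj, hbi, hbi']
    · rw [hbo j hj, hbo' j hj]
  constructor
  · intro c
    by_cases hc : c = i
    · have := hbo' c (hc ▸ hii')
      exact this ▸ hb'mem.1 c
    · have := hbo c hc
      exact this ▸ hbmem.1 c
  · exact ⟨i, i', hii', hbi ▸ hbmem.1 i, hbi' ▸ hb'mem.1 i'⟩

lemma ncard_prime_le {B : Fin h → Set ℕ} (hpos : ∀ i, ∀ b ∈ B i, 0 < b) {p : ℕ}
    (hp : p.Prime) : (repSet B p).ncard ≤ h := by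
  classical
  refine ncard_le_of_inj (fun b =>
    if hb : ∃ i, b i = p ∧ ∀ j, j ≠ i → b j = 1 then (hb.choose : Fin h).val else 0) ?_ ?_
  · intro b hb
    have hex := rep_of_prime hp hb
    simp only [dif_pos hex]
    exact (hex.choose).2
  · intro b hb b' hb' heq
    have hex := rep_of_prime hp hb
    have hex' := rep_of_prime hp hb'
    simp only [dif_pos hex, dif_pos hex'] at heq
    have hii : hex.choose = hex'.choose := Fin.ext heq
    obtain ⟨hbi, hbo⟩ := hex.choose_spec
    obtain ⟨hbi', hbo'⟩ := hex'.choose_spec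
    funext j
    by_cases hj : j = hex.choose
    · subst hj; rw [hbi, hii]; exact hbi'.symm
    · rw [hbo j hj, hbo' j (by rw [← hii]; exact hj)]

lemma rep_partition {B : Fin h → Set ℕ} {F : Finset ℕ} (hF : ∀ p ∈ F, Nat.Prime p)
    {b : Fin h → ℕ} (hb : b ∈ repSet B (∏ p ∈ F, p)) :
    ∃ G : Fin h → Finset ℕ, (∀ c, G c ⊆ F ∧ b c = ∏ p ∈ G c, p) ∧
      F.card ≤ ∑ c, (G c).card := by
  classical
  obtain ⟨hmem, hprod⟩ := hb
  have hdvd : ∀ c, b c ∣ ∏ p ∈ F, p :=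
    fun c => hprod ▸ Finset.dvd_prod_of_mem b (Finset.mem_univ c)
  choose G hGsub hGeq using fun c => dvd_prod_primes F hF (b c) (hdvd c)
  refine ⟨G, fun c => ⟨hGsub c, hGeq c⟩, ?_⟩
  have hcover : F ⊆ Finset.univ.biUnion G := by
    intro p hpF
    have hpp : Nat.Prime p := hF p hpF
    have hpd : p ∣ ∏ c, b c := by
      rw [hprod]
      exact Finset.dvd_prod_of_mem _ hpF
    obtain ⟨c, -, hc⟩ := hpp.prime.exists_mem_finset_dvd hpd
    rw [hGeq c] at hc
    obtain ⟨q, hq, hpq⟩ := hpp.prime.exists_mem_finset_dvd hc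
    have : p = q := ((Nat.prime_dvd_prime_iff_eq hpp (hF q (hGsub c hq))).mp hpq)
    exact Finset.mem_biUnion.mpr ⟨c, Finset.mem_univ c, this ▸ hq⟩
  calc F.card ≤ (Finset.univ.biUnion G).card := Finset.card_le_card hcover
    _ ≤ ∑ c, (G c).card := Finset.card_biUnion_le

lemma no_bounded_double (hh : 2 ≤ h) {B : Fin h → Set ℕ}
    (hpos : ∀ i, ∀ b ∈ B i, 0 < b) {N T : ℕ}
    (hlow : ∀ n, N ≤ n → 2 ≤ (repSet B n).ncard)
    (hup : ∀ n, N ≤ n → (repSet B n).ncard ≤ T) : False := by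
  classical
  have h2T : 2 ≤ T := le_trans (hlow N le_rfl) (hup N le_rfl)
  set S₀ : Set ℕ := {p : ℕ | Nat.Prime p ∧ N ≤ p} with hS₀def
  have hS₀ : S₀.Infinite := by
    refine Set.Infinite.mono ?_ (s := {p : ℕ | Nat.Prime p} \ Set.Iio N)
      (Nat.infinite_setOf_prime.diff (Set.finite_Iio N))
    rintro p ⟨hp, hpN⟩
    exact ⟨hp, not_lt.mp hpN⟩
  set Cmem : Finset ℕ → (Fin h → Bool) := fun F c => decide ((∏ p ∈ F, p) ∈ B c) with hCmem
  choose Tf hTsub hTinf vf hvf using fun (s : ℕ) (A : Set ℕ) (hA : A.Infinite) =>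
    infinite_ramsey s Cmem A hA
  set Q : ℕ → {A : Set ℕ // A.Infinite} := fun s =>
    Nat.rec ⟨S₀, hS₀⟩ (fun s p => ⟨Tf (s+1) p.1 p.2, hTinf (s+1) p.1 p.2⟩) s with hQ
  have Qsucc : ∀ s, (Q (s+1)).1 = Tf (s+1) (Q s).1 (Q s).2 := fun s => rfl
  have Qmono : ∀ s, (Q (s+1)).1 ⊆ (Q s).1 := fun s => by
    rw [Qsucc]; exact hTsub _ _ _
  have Qmono' : ∀ s t, s ≤ t → (Q t).1 ⊆ (Q s).1 := by
    intro s t hst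
    induction hst with
    | refl => exact subset_rfl
    | step _ ih => exact fun x hx => ih (Qmono _ hx)
  have QS₀ : ∀ s, ∀ x ∈ (Q s).1, Nat.Prime x ∧ N ≤ x :=
    fun s x hx => Qmono' 0 s (Nat.zero_le s) hx
  set w : ℕ → (Fin h → Bool) := fun s =>
    Nat.rec (Cmem ∅) (fun s _ => vf (s+1) (Q s).1 (Q s).2) s with hw
  have huni : ∀ s (F : Finset ℕ), ↑F ⊆ (Q s).1 → F.card = s → Cmem F = w s := by
    intro s F hFsub hFcard
    cases s with
    | zero => rw [Finset.card_eq_zero.mp hFcard]; rfl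
    | succ s => exact hvf (s+1) (Q s).1 (Q s).2 F (by rw [← Qsucc]; exact hFsub) hFcard
  have huni' : ∀ s k (F : Finset ℕ), s ≤ k → ↑F ⊆ (Q k).1 → F.card = s → Cmem F = w s :=
    fun s k F hsk hFsub hFcard => huni s F (fun x hx => Qmono' s k hsk (hFsub hx)) hFcard
  obtain ⟨q1, hq1⟩ := (Q 1).2.nonempty
  have hq1S := QS₀ 1 q1 hq1
  obtain ⟨hone, i, i', hii', hqi, hqi'⟩ :=
    prime_structure hpos hq1S.1 (hlow q1 hq1S.2)
  have hw1 : ∀ c, q1 ∈ B c → w 1 c = true := by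
    intro c hc
    have hu : Cmem {q1} = w 1 := huni 1 {q1} (by simpa using hq1) (Finset.card_singleton q1)
    have := congrFun hu c
    rw [← this]
    show decide ((∏ p ∈ ({q1} : Finset ℕ), p) ∈ B c) = true
    rw [Finset.prod_singleton]
    exact decide_eq_true hc
  have hwfalse : ∀ s, T ≤ s → ∀ c, w s c = false := by
    intro s hs c
    by_contra hcon
    have hwc : w s c = true := by
      cases hb : w s c
      · exact absurd hb hcon
      · rfl
    obtain ⟨c', hc'ne, hc'1⟩ : ∃ c', c' ≠ c ∧ w 1 c' = true := by
      by_cases hic : i = c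
      · exact ⟨i', by rw [← hic]; exact hii'.symm, hw1 i' hqi'⟩
      · exact ⟨i, hic, hw1 i hqi⟩
    obtain ⟨F, hFsub, hFcard⟩ := (Q (s+1)).2.exists_subset_card_eq (s+1)
    have hFprime : ∀ p ∈ F, Nat.Prime p := fun p hp => (QS₀ (s+1) p (hFsub hp)).1
    have hnpos : 0 < ∏ p ∈ F, p := Finset.prod_pos (fun p hp => (hFprime p hp).pos)
    have hFne : F.Nonempty := Finset.card_pos.mp (by omega)
    have hnN : N ≤ ∏ p ∈ F, p := by
      obtain ⟨q, hq⟩ := hFne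
      calc N ≤ q := (QS₀ (s+1) q (hFsub hq)).2
        _ ≤ ∏ p ∈ F, p := Nat.le_of_dvd hnpos (Finset.dvd_prod_of_mem _ hq)
    have hcc' : c ≠ c' := Ne.symm hc'ne
    set Φ : ℕ → (Fin h → ℕ) := fun j => pair c c' (∏ p ∈ F.erase j, p) j with hΦ
    have hΦmem : ∀ j ∈ F, Φ j ∈ repSet B (∏ p ∈ F, p) := by
      intro j hj
      constructor
      · intro d
        by_cases hdc : d = c
        · subst hdc
          rw [show Φ j d = ∏ p ∈ F.erase j, p from pair_apply_left]
          have hcard' : (F.erase j).card = s := by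
            rw [Finset.card_erase_of_mem hj, hFcard]; omega
          have hu := huni' s (s+1) (F.erase j) (Nat.le_succ s)
            (fun x hx => hFsub (Finset.erase_subset _ _ hx)) hcard'
          have hd := congrFun hu d
          rw [hwc] at hd
          exact of_decide_eq_true hd
        · by_cases hdc' : d = c'
          · subst hdc'
            rw [show Φ j d = j from pair_apply_right hcc']
            have hu := huni' 1 (s+1) {j} (by omega) (by simpa using hFsub hj)
              (Finset.card_singleton j)
            have hd := congrFun hu d
            rw [hc'1] at hd
            have hd' : decide ((∏ p ∈ ({j} : Finset ℕ), p) ∈ B d) = true := hd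
            rw [Finset.prod_singleton] at hd'
            exact of_decide_eq_true hd'
          · rw [show Φ j d = 1 from pair_apply_other hdc hdc']
            exact hone d
      · rw [show (∏ d, Φ j d) = (∏ p ∈ F.erase j, p) * j from prod_pair hcc' _ _]
        exact Finset.prod_erase_mul _ _ hj
    have hΦinj : Set.InjOn Φ ↑F := by
      intro j hj k hk hjk
      have := congrFun hjk c'
      rwa [show Φ j c' = j from pair_apply_right hcc',
        show Φ k c' = k from pair_apply_right hcc'] at this
    have hcard2 : (Φ '' ↑F).ncard = s+1 := by
      rw [Set.ncard_image_of_injOn hΦinj, Set.ncard_coe_finset, hFcard]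
    have hsub2 : Φ '' ↑F ⊆ repSet B (∏ p ∈ F, p) := by
      rintro x ⟨j, hj, rfl⟩; exact hΦmem j hj
    have hle := Set.ncard_le_ncard hsub2 (repSet_finite B hpos _)
    rw [hcard2] at hle
    have := hup _ hnN
    omega
  -- final contradiction
  obtain ⟨F, hFsub, hFcard⟩ := (Q (h*T+1)).2.exists_subset_card_eq (h*T+1)
  have hFprime : ∀ p ∈ F, Nat.Prime p := fun p hp => (QS₀ (h*T+1) p (hFsub hp)).1
  have hnpos : 0 < ∏ p ∈ F, p := Finset.prod_pos (fun p hp => (hFprime p hp).pos)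
  have hFne : F.Nonempty := Finset.card_pos.mp (by omega)
  have hnN : N ≤ ∏ p ∈ F, p := by
    obtain ⟨q, hq⟩ := hFne
    calc N ≤ q := (QS₀ (h*T+1) q (hFsub hq)).2
      _ ≤ ∏ p ∈ F, p := Nat.le_of_dvd hnpos (Finset.dvd_prod_of_mem _ hq)
  obtain ⟨b, hb⟩ : (repSet B (∏ p ∈ F, p)).Nonempty := by
    have h2 := hlow _ hnN
    rcases Set.eq_empty_or_nonempty (repSet B (∏ p ∈ F, p)) with he | hne
    · rw [he, Set.ncard_empty] at h2; omega
    · exact hne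
  obtain ⟨G, hG, hGcard⟩ := rep_partition hFprime hb
  obtain ⟨c, hc⟩ : ∃ c, T + 1 ≤ (G c).card := by
    by_contra hcon
    push_neg at hcon
    have hsum : ∑ c, (G c).card ≤ ∑ _c : Fin h, T :=
      Finset.sum_le_sum (fun c _ => by have := hcon c; omega)
    rw [Finset.sum_const, Finset.card_univ, Fintype.card_fin, smul_eq_mul] at hsum
    omega
  have hGsubF : G c ⊆ F := (hG c).1
  have hGcardle : (G c).card ≤ h*T+1 := by
    rw [← hFcard]; exact Finset.card_le_card hGsubF
  have hu := huni' (G c).card (h*T+1) (G c) hGcardle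
    (fun x hx => hFsub (hGsubF hx)) rfl
  have hCc := congrFun hu c
  rw [hwfalse (G c).card (by omega) c] at hCc
  have hCc' : decide ((∏ p ∈ G c, p) ∈ B c) = false := hCc
  have hmemB : (∏ p ∈ G c, p) ∈ B c := by
    rw [← (hG c).2]; exact hb.1 c
  exact absurd hmemB (of_decide_eq_false hCc')

lemma frequently_primes : ∃ᶠ n in (atTop : Filter ℕ), Nat.Prime n := by
  rw [frequently_atTop]
  intro a
  obtain ⟨p, hp, hpp⟩ := Nat.exists_infinite_primes a
  exact ⟨p, hp, hpp⟩

lemma enat_le_one_of_lt_two {x : ℕ∞} (hx : x < 2) : x ≤ 1 := by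
  cases x with
  | top => simp at hx
  | coe m =>
    have : m < 2 := by exact_mod_cast hx
    exact_mod_cast Nat.lt_succ_iff.mp this

lemma forward (hh : 2 ≤ h) (B : Fin h → Set ℕ) (hpos : ∀ i, ∀ b ∈ B i, 0 < b) (N : ℕ)
    (hN : ∀ n, N ≤ n → 1 ≤ (repSet B n).ncard) :
    (liminf (fun n : ℕ => ((repSet B n).ncard : ℕ∞)) atTop = 1 ∧
      ((∃ t : ℕ, 0 < t ∧ limsup (fun n : ℕ => ((repSet B n).ncard : ℕ∞)) atTop = (t : ℕ∞)) ∨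
        limsup (fun n : ℕ => ((repSet B n).ncard : ℕ∞)) atTop = ⊤)) ∨
    (∃ s : ℕ, 2 ≤ s ∧ s ≤ h ∧
      liminf (fun n : ℕ => ((repSet B n).ncard : ℕ∞)) atTop = (s : ℕ∞) ∧
      limsup (fun n : ℕ => ((repSet B n).ncard : ℕ∞)) atTop = ⊤) := by
  set gg : ℕ → ℕ∞ := fun n => ((repSet B n).ncard : ℕ∞) with hgg
  have hL1 : 1 ≤ liminf gg atTop := by
    refine le_liminf_of_le ?_ ?_
    · isBoundedDefault
    · rw [eventually_atTop]
      refine ⟨N, fun n hn => ?_⟩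
      show (1 : ℕ∞) ≤ ((repSet B n).ncard : ℕ∞)
      exact_mod_cast hN n hn
  have hLU : liminf gg atTop ≤ limsup gg atTop := liminf_le_limsup
  have hU1 : 1 ≤ limsup gg atTop := le_trans hL1 hLU
  have hLh : liminf gg atTop ≤ (h : ℕ∞) := by
    refine liminf_le_of_frequently_le ?_ ?_
    · refine frequently_primes.mono (fun n hn => ?_)
      show ((repSet B n).ncard : ℕ∞) ≤ (h : ℕ∞)
      exact_mod_cast ncard_prime_le hpos hn
    · isBoundedDefault
  rcases eq_or_ne (limsup gg atTop) ⊤ with hUtop | hUne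
  · rcases eq_or_ne (liminf gg atTop) 1 with hLone | hLne
    · exact Or.inl ⟨hLone, Or.inr hUtop⟩
    · right
      have hL2 : 1 < liminf gg atTop := lt_of_le_of_ne hL1 (Ne.symm hLne)
      obtain ⟨s, hs⟩ : ∃ s : ℕ, liminf gg atTop = (s : ℕ∞) := by
        cases hc : liminf gg atTop with
        | top =>
          rw [hc] at hLh
          exact absurd (top_le_iff.mp hLh) (by simp)
        | coe m => exact ⟨m, rfl⟩
      rw [hs] at hL2 hLh
      refine ⟨s, by exact_mod_cast hL2, by exact_mod_cast hLh, hs, hUtop⟩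
  · obtain ⟨t, ht⟩ : ∃ t : ℕ, limsup gg atTop = (t : ℕ∞) := by
      cases hc : limsup gg atTop with
      | top => exact absurd hc hUne
      | coe m => exact ⟨m, rfl⟩
    rw [ht] at hU1
    have htpos : 0 < t := by exact_mod_cast hU1
    have hLone : liminf gg atTop = 1 := by
      by_contra hLne
      have hL2 : (2 : ℕ∞) ≤ liminf gg atTop := by
        have h1L : 1 < liminf gg atTop := lt_of_le_of_ne hL1 (Ne.symm hLne)
        have h12 := (ENat.add_one_le_iff (by simp : (1:ℕ∞) ≠ ⊤)).mpr h1L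
        calc (2:ℕ∞) = 1+1 := by norm_num
          _ ≤ _ := h12
      have hev2 : ∀ᶠ n in atTop, (2 : ℕ∞) ≤ gg n := by
        by_contra hev
        have hfreq : ∃ᶠ n in atTop, gg n ≤ 1 := by
          rw [not_eventually] at hev
          exact hev.mono (fun n hn => enat_le_one_of_lt_two (not_le.mp hn))
        have hbad := le_trans hL2 (liminf_le_of_frequently_le hfreq)
        norm_num at hbad
      have hevt : ∀ᶠ n in atTop, gg n ≤ (t : ℕ∞) := by
        by_contra hev
        have hfreq : ∃ᶠ n in atTop, ((t:ℕ∞) + 1) ≤ gg n := by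
          rw [not_eventually] at hev
          exact hev.mono (fun n hn =>
            (ENat.add_one_le_iff (by simp : (t:ℕ∞) ≠ ⊤)).mpr (not_le.mp hn))
        have hbad := le_limsup_of_frequently_le hfreq
        rw [ht] at hbad
        have hbad2 : (t:ℕ∞) + 1 ≤ (t:ℕ∞) + 0 := by simpa using hbad
        have := (WithTop.add_le_add_iff_left (by simp : (t:ℕ∞) ≠ ⊤)).mp hbad2
        norm_num at this
        exact absurd (WithTop.coe_le_coe.mp (show ((1:ℕ) : WithTop ℕ) ≤ ((0:ℕ) : WithTop ℕ) from this)) (by norm_num)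
      rw [eventually_atTop] at hev2 hevt
      obtain ⟨N2, hN2⟩ := hev2
      obtain ⟨N3, hN3⟩ := hevt
      apply no_bounded_double hh hpos (N := max N2 N3) (T := t)
      · intro n hn
        have h2 := hN2 n (le_trans (le_max_left _ _) hn)
        have h2' : (2 : ℕ∞) ≤ ((repSet B n).ncard : ℕ∞) := h2
        exact_mod_cast h2'
      · intro n hn
        have h3 := hN3 n (le_trans (le_max_right _ _) hn)
        have h3' : ((repSet B n).ncard : ℕ∞) ≤ (t : ℕ∞) := h3
        exact_mod_cast h3'
    exact Or.inl ⟨hLone, Or.inl ⟨t, htpos, ht⟩⟩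

lemma limsup_top_of_unbounded {u : ℕ → ℕ∞} (hu : ∀ M : ℕ, ∃ᶠ n in atTop, (M:ℕ∞) ≤ u n) :
    limsup u atTop = ⊤ := by
  by_contra hne
  obtain ⟨t, ht⟩ : ∃ t : ℕ, limsup u atTop = (t : ℕ∞) := by
    cases hc : limsup u atTop with
    | top => exact absurd hc hne
    | coe m => exact ⟨m, rfl⟩
  have hle := le_limsup_of_frequently_le (hu (t+1))
  rw [ht] at hle
  have : t + 1 ≤ t := by exact_mod_cast hle
  omega

lemma liminf_eq_coe {u : ℕ → ℕ∞} {s : ℕ}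
    (hev : ∀ᶠ n in atTop, (s:ℕ∞) ≤ u n) (hfr : ∃ᶠ n in atTop, u n ≤ (s:ℕ∞)) :
    liminf u atTop = (s:ℕ∞) := by
  refine le_antisymm ?_ ?_
  · refine liminf_le_of_frequently_le hfr ?_
    isBoundedDefault
  · refine le_liminf_of_le ?_ hev
    isBoundedDefault

lemma constructionA (hh : 2 ≤ h) (s : ℕ) (h2s : 2 ≤ s) (hsh : s ≤ h) :
    ∃ B : Fin h → Set ℕ, (∀ i, ∀ b ∈ B i, 0 < b) ∧
      (∃ N : ℕ, ∀ n, N ≤ n → 1 ≤ (repSet B n).ncard) ∧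
      liminf (fun n : ℕ => ((repSet B n).ncard : ℕ∞)) atTop = (s:ℕ∞) ∧
      limsup (fun n : ℕ => ((repSet B n).ncard : ℕ∞)) atTop = ⊤ := by
  classical
  refine ⟨fun i => if (i:ℕ) < s then {m : ℕ | 0 < m} else {1}, ?_⟩
  set B : Fin h → Set ℕ := fun i => if (i:ℕ) < s then {m : ℕ | 0 < m} else {1} with hB
  have hmemiff : ∀ (c : Fin h) (m : ℕ), m ∈ B c ↔ (if (c:ℕ) < s then 0 < m else m = 1) := by
    intro c m
    show m ∈ (if (c:ℕ) < s then {m : ℕ | 0 < m} else ({1} : Set ℕ)) ↔ _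
    by_cases hc : (c:ℕ) < s
    · rw [if_pos hc, if_pos hc]; rfl
    · rw [if_neg hc, if_neg hc]; rfl
  have hpos : ∀ i, ∀ b ∈ B i, 0 < b := by
    intro i b hb
    rw [hmemiff] at hb
    by_cases hi : (i:ℕ) < s
    · rwa [if_pos hi] at hb
    · rw [if_neg hi] at hb; omega
  have hone : ∀ c, 1 ∈ B c := by
    intro c
    rw [hmemiff]
    by_cases hc : (c:ℕ) < s
    · rw [if_pos hc]; exact Nat.one_pos
    · rw [if_neg hc]
  have hmem_lt : ∀ (c : Fin h), (c:ℕ) < s → ∀ m : ℕ, 0 < m → m ∈ B c := by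
    intro c hc m hm
    rw [hmemiff, if_pos hc]; exact hm
  have hsingle_mem : ∀ (i : Fin h), (i:ℕ) < s → ∀ n : ℕ, 0 < n → single i n ∈ repSet B n := by
    intro i hi n hn
    constructor
    · intro c
      by_cases hc : c = i
      · rw [hc, single_apply_self]; exact hmem_lt i hi n hn
      · rw [single_apply_other hc]; exact hone c
    · exact prod_single n
  have hlow : ∀ n, 2 ≤ n → s ≤ (repSet B n).ncard := by
    intro n hn
    refine le_ncard_of_inj (repSet_finite B hpos n)
      (fun j : Fin s => single (⟨(j:ℕ), lt_of_lt_of_le j.2 hsh⟩ : Fin h) n)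
      (fun j => hsingle_mem _ (by simpa using j.2) n (by omega)) ?_
    intro j j' hjj
    have hval : single (⟨(j:ℕ), lt_of_lt_of_le j.2 hsh⟩ : Fin h) n
        (⟨(j:ℕ), lt_of_lt_of_le j.2 hsh⟩ : Fin h) =
        single (⟨(j':ℕ), lt_of_lt_of_le j'.2 hsh⟩ : Fin h) n
        (⟨(j:ℕ), lt_of_lt_of_le j.2 hsh⟩ : Fin h) := congrFun hjj _
    rw [single_apply_self] at hval
    by_cases hne : (⟨(j:ℕ), lt_of_lt_of_le j.2 hsh⟩ : Fin h) = ⟨(j':ℕ), lt_of_lt_of_le j'.2 hsh⟩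
    · have hv : ((⟨(j:ℕ), lt_of_lt_of_le j.2 hsh⟩ : Fin h) : ℕ)
          = ((⟨(j':ℕ), lt_of_lt_of_le j'.2 hsh⟩ : Fin h) : ℕ) := congrArg Fin.val hne
      exact Fin.ext (by simpa using hv)
    · rw [single_apply_other hne] at hval
      omega
  have hprime : ∀ p : ℕ, Nat.Prime p → (repSet B p).ncard ≤ s := by
    intro p hp
    refine ncard_le_of_inj (fun b =>
      if hb : ∃ i, b i = p ∧ ∀ j, j ≠ i → b j = 1 then (hb.choose : Fin h).val else 0) ?_ ?_
    · intro b hb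
      have hex := rep_of_prime hp hb
      simp only [dif_pos hex]
      by_contra hge
      push_neg at hge
      have hmem := hb.1 hex.choose
      rw [hmemiff, if_neg (by omega)] at hmem
      rw [hex.choose_spec.1] at hmem
      exact hp.one_lt.ne' hmem
    · intro b hb b' hb' heq
      have hex := rep_of_prime hp hb
      have hex' := rep_of_prime hp hb'
      simp only [dif_pos hex, dif_pos hex'] at heq
      have hii : hex.choose = hex'.choose := Fin.ext heq
      obtain ⟨hbi, hbo⟩ := hex.choose_spec
      obtain ⟨hbi', hbo'⟩ := hex'.choose_spec
      funext j
      by_cases hj : j = hex.choose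
      · subst hj; rw [hbi, hii]; exact hbi'.symm
      · rw [hbo j hj, hbo' j (by rw [← hii]; exact hj)]
  have h0 : (0:ℕ) < h := by omega
  have h1 : (1:ℕ) < h := by omega
  have hi01 : (⟨0, h0⟩ : Fin h) ≠ ⟨1, h1⟩ := by
    intro hc
    exact absurd (congrArg Fin.val hc) (by simp)
  have hpow : ∀ k : ℕ, k + 1 ≤ (repSet B (2^k)).ncard := by
    intro k
    have hmem : ∀ a : Fin (k+1),
        pair (⟨0, h0⟩ : Fin h) (⟨1, h1⟩ : Fin h) (2^(a:ℕ)) (2^(k-(a:ℕ))) ∈ repSet B (2^k) := by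
      intro a
      constructor
      · intro c
        by_cases hc : c = (⟨0, h0⟩ : Fin h)
        · rw [hc, pair_apply_left]
          exact hmem_lt _ (by simp; omega) _ (Nat.pow_pos (by omega))
        · by_cases hc' : c = (⟨1, h1⟩ : Fin h)
          · rw [hc', pair_apply_right hi01]
            exact hmem_lt _ (by simp; omega) _ (Nat.pow_pos (by omega))
          · rw [pair_apply_other hc hc']; exact hone c
      · rw [prod_pair hi01, ← pow_add]
        congr 1
        have := a.2
        omega
    refine le_ncard_of_inj (repSet_finite B hpos _)
      (fun a : Fin (k+1) => pair (⟨0, h0⟩ : Fin h) (⟨1, h1⟩ : Fin h) (2^(a:ℕ)) (2^(k-(a:ℕ))))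
      hmem ?_
    intro a a' haa
    have hval : pair (⟨0, h0⟩ : Fin h) (⟨1, h1⟩ : Fin h) (2^(a:ℕ)) (2^(k-(a:ℕ))) ⟨0, h0⟩ =
        pair (⟨0, h0⟩ : Fin h) (⟨1, h1⟩ : Fin h) (2^(a':ℕ)) (2^(k-(a':ℕ))) ⟨0, h0⟩ :=
      congrFun haa _
    rw [pair_apply_left, pair_apply_left] at hval
    exact Fin.ext (Nat.pow_right_injective (le_refl 2) hval)
  refine ⟨hpos, ⟨2, fun n hn => le_trans (by omega) (hlow n hn)⟩, ?_, ?_⟩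
  · refine liminf_eq_coe ?_ ?_
    · rw [eventually_atTop]
      refine ⟨2, fun n hn => ?_⟩
      show (s:ℕ∞) ≤ ((repSet B n).ncard : ℕ∞)
      exact_mod_cast hlow n hn
    · refine frequently_primes.mono (fun p hp => ?_)
      show ((repSet B p).ncard : ℕ∞) ≤ (s:ℕ∞)
      exact_mod_cast hprime p hp
  · refine limsup_top_of_unbounded (fun M => ?_)
    rw [frequently_atTop]
    intro a
    refine ⟨2^(max M a), le_trans (le_max_right M a) (Nat.le_of_lt (Nat.lt_two_pow_self)), ?_⟩
    show (M:ℕ∞) ≤ ((repSet B (2^(max M a))).ncard : ℕ∞)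
    have hp2 := hpow (max M a)
    have hM : M ≤ (repSet B (2^(max M a))).ncard := by
      have := le_max_left M a
      omega
    exact_mod_cast hM

lemma fin01_ne (h1 : 1 < h) : (⟨0, by omega⟩ : Fin h) ≠ ⟨1, h1⟩ := by
  intro hc
  have := congrArg Fin.val hc
  simp at this

def BJ (h : ℕ) (J : Set ℕ) : Fin h → Set ℕ := fun i =>
  if (i:ℕ) = 0 then {m : ℕ | 0 < m} else if (i:ℕ) = 1 then {m : ℕ | ∃ j ∈ J, m = 2^j} else {1}

lemma BJ_mem_iff {J : Set ℕ} {c : Fin h} {m : ℕ} :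
    m ∈ BJ h J c ↔
      (if (c:ℕ) = 0 then 0 < m else if (c:ℕ) = 1 then (∃ j ∈ J, m = 2^j) else m = 1) := by
  show m ∈ (if (c:ℕ) = 0 then {m : ℕ | 0 < m}
    else if (c:ℕ) = 1 then {m : ℕ | ∃ j ∈ J, m = 2^j} else {1}) ↔ _
  split_ifs <;> rfl

lemma BJ_pos {J : Set ℕ} : ∀ i, ∀ b ∈ BJ h J i, 0 < b := by
  intro i b hb
  rw [BJ_mem_iff] at hb
  split_ifs at hb with h0 h1
  · exact hb
  · obtain ⟨j, _, rfl⟩ := hb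
    exact Nat.pow_pos (by omega)
  · omega

lemma BJ_one {J : Set ℕ} (hJ0 : 0 ∈ J) : ∀ c, 1 ∈ BJ h J c := by
  intro c
  rw [BJ_mem_iff]
  split_ifs with h0 h1
  · omega
  · exact ⟨0, hJ0, rfl⟩
  · rfl

lemma BJ_pair_mem {J : Set ℕ} (hJ0 : 0 ∈ J) (h1 : 1 < h) {n j : ℕ} (hn : 0 < n)
    (hj : j ∈ J) (hdvd : 2^j ∣ n) :
    pair (⟨0, by omega⟩ : Fin h) (⟨1, h1⟩ : Fin h) (n / 2^j) (2^j) ∈ repSet (BJ h J) n := by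
  have hi01 := fin01_ne h1
  constructor
  · intro c
    by_cases hc : c = (⟨0, by omega⟩ : Fin h)
    · rw [hc, pair_apply_left, BJ_mem_iff]
      rw [if_pos rfl]
      exact Nat.div_pos (Nat.le_of_dvd hn hdvd) (Nat.pow_pos (by omega))
    · by_cases hc' : c = (⟨1, h1⟩ : Fin h)
      · rw [hc', pair_apply_right hi01, BJ_mem_iff]
        rw [if_neg (by simp), if_pos rfl]
        exact ⟨j, hj, rfl⟩
      · rw [pair_apply_other hc hc']
        exact BJ_one hJ0 c
  · rw [prod_pair hi01]
    exact Nat.div_mul_cancel hdvd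

lemma BJ_rep_struct {J : Set ℕ} (h1 : 1 < h) {n : ℕ} {b : Fin h → ℕ}
    (hb : b ∈ repSet (BJ h J) n) :
    ∃ j ∈ J, 2^j ∣ n ∧ b = pair (⟨0, by omega⟩ : Fin h) (⟨1, h1⟩ : Fin h) (n / 2^j) (2^j) := by
  have hi01 := fin01_ne h1
  obtain ⟨hmem, hprod⟩ := hb
  have hb1 := hmem (⟨1, h1⟩ : Fin h)
  rw [BJ_mem_iff, if_neg (by simp), if_pos rfl] at hb1
  obtain ⟨j, hjJ, hj⟩ := hb1
  have hother : ∀ c, c ≠ (⟨0, by omega⟩ : Fin h) → c ≠ (⟨1, h1⟩ : Fin h) → b c = 1 := by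
    intro c hc hc'
    have := hmem c
    rw [BJ_mem_iff, if_neg, if_neg] at this
    · exact this
    · intro hv; exact hc' (Fin.ext hv)
    · intro hv; exact hc (Fin.ext hv)
  have hsplit : b (⟨0, by omega⟩ : Fin h) * b (⟨1, h1⟩ : Fin h) = n := by
    rw [← prod_eq_pair_of hi01 hother, hprod]
  rw [hj] at hsplit
  have hdvd : 2^j ∣ n := ⟨b (⟨0, by omega⟩ : Fin h), by rw [← hsplit, mul_comm]⟩
  have hb0 : b (⟨0, by omega⟩ : Fin h) = n / 2^j := by
    rw [← hsplit, Nat.mul_div_cancel _ (Nat.pow_pos (by omega))]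
  refine ⟨j, hjJ, hdvd, ?_⟩
  funext c
  by_cases hc : c = (⟨0, by omega⟩ : Fin h)
  · rw [hc, pair_apply_left, hb0]
  · by_cases hc' : c = (⟨1, h1⟩ : Fin h)
    · rw [hc', pair_apply_right hi01, hj]
    · rw [pair_apply_other hc hc', hother c hc hc']

lemma repSet_nonzero {B : Fin h → Set ℕ} (hpos : ∀ i, ∀ b ∈ B i, 0 < b) :
    repSet B 0 = ∅ := by
  ext b
  simp only [repSet, Set.mem_setOf_eq, Set.mem_empty_iff_false, iff_false, not_and]
  intro hb hprod
  have : 0 < ∏ i, b i := Finset.prod_pos (fun i _ => hpos i _ (hb i))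
  omega

lemma BJ_low {J : Set ℕ} (hJ0 : 0 ∈ J) (h1 : 1 < h) {n : ℕ} (hn : 1 ≤ n) :
    1 ≤ (repSet (BJ h J) n).ncard := by
  have hmem := BJ_pair_mem hJ0 h1 (n := n) (j := 0) (by omega) hJ0 (by simpa using Nat.one_dvd n)
  have hfin := repSet_finite (BJ h J) (BJ_pos (h := h) (J := J)) n
  have := (Set.ncard_pos hfin).mpr ⟨_, hmem⟩
  omega

lemma BJ_odd {J : Set ℕ} (h1 : 1 < h) {n : ℕ} (hodd : n % 2 = 1) :
    (repSet (BJ h J) n).ncard ≤ 1 := by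
  rw [Set.ncard_le_one (repSet_finite (BJ h J) (BJ_pos (h := h) (J := J)) n)]
  intro b hb b' hb'
  obtain ⟨j, _, hdvd, hbeq⟩ := BJ_rep_struct h1 hb
  obtain ⟨j', _, hdvd', hbeq'⟩ := BJ_rep_struct h1 hb'
  have hj0 : j = 0 := by
    by_contra hj
    have : 2 ∣ n := dvd_trans (dvd_pow_self 2 hj) hdvd
    omega
  have hj0' : j' = 0 := by
    by_contra hj
    have : 2 ∣ n := dvd_trans (dvd_pow_self 2 hj) hdvd'
    omega
  rw [hbeq, hbeq', hj0, hj0']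

lemma BJ_liminf {J : Set ℕ} (hJ0 : 0 ∈ J) (h1 : 1 < h) :
    liminf (fun n : ℕ => ((repSet (BJ h J) n).ncard : ℕ∞)) atTop = 1 := by
  have := liminf_eq_coe (u := fun n : ℕ => ((repSet (BJ h J) n).ncard : ℕ∞)) (s := 1) ?_ ?_
  · simpa using this
  · rw [eventually_atTop]
    refine ⟨1, fun n hn => ?_⟩
    show ((1:ℕ) : ℕ∞) ≤ ((repSet (BJ h J) n).ncard : ℕ∞)
    exact_mod_cast BJ_low hJ0 h1 hn
  · rw [frequently_atTop]
    intro a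
    refine ⟨2*a+1, by omega, ?_⟩
    show ((repSet (BJ h J) (2*a+1)).ncard : ℕ∞) ≤ ((1:ℕ) : ℕ∞)
    exact_mod_cast BJ_odd h1 (by omega)

lemma constructionB (hh : 2 ≤ h) (t : ℕ) (ht : 0 < t) :
    ∃ B : Fin h → Set ℕ, (∀ i, ∀ b ∈ B i, 0 < b) ∧
      (∃ N : ℕ, ∀ n, N ≤ n → 1 ≤ (repSet B n).ncard) ∧
      liminf (fun n : ℕ => ((repSet B n).ncard : ℕ∞)) atTop = 1 ∧
      limsup (fun n : ℕ => ((repSet B n).ncard : ℕ∞)) atTop = (t:ℕ∞) := by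
  classical
  have h1 : 1 < h := by omega
  have hJ0 : (0:ℕ) ∈ Set.Iio t := by simpa using ht
  refine ⟨BJ h (Set.Iio t), BJ_pos, ⟨1, fun n hn => BJ_low hJ0 h1 hn⟩, BJ_liminf hJ0 h1, ?_⟩
  have hup : ∀ n : ℕ, (repSet (BJ h (Set.Iio t)) n).ncard ≤ t := by
    intro n
    rcases Nat.eq_zero_or_pos n with rfl | hn
    · rw [repSet_nonzero BJ_pos, Set.ncard_empty]; omega
    refine ncard_le_of_inj (fun b =>
      if hb : ∃ j, j ∈ Set.Iio t ∧ b (⟨1, h1⟩ : Fin h) = 2^j then hb.choose else 0) ?_ ?_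
    · intro b hb
      obtain ⟨j, hjJ, hdvd, hbeq⟩ := BJ_rep_struct h1 hb
      have hex : ∃ j, j ∈ Set.Iio t ∧ b (⟨1, h1⟩ : Fin h) = 2^j := by
        refine ⟨j, hjJ, ?_⟩
        rw [hbeq, pair_apply_right (fin01_ne h1)]
      simp only [dif_pos hex]
      exact hex.choose_spec.1
    · intro b hb b' hb' heq
      obtain ⟨j, hjJ, hdvd, hbeq⟩ := BJ_rep_struct h1 hb
      obtain ⟨j', hjJ', hdvd', hbeq'⟩ := BJ_rep_struct h1 hb'
      have hi01 := fin01_ne h1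
      have hex : ∃ j, j ∈ Set.Iio t ∧ b (⟨1, h1⟩ : Fin h) = 2^j := by
        refine ⟨j, hjJ, by rw [hbeq, pair_apply_right hi01]⟩
      have hex' : ∃ j, j ∈ Set.Iio t ∧ b' (⟨1, h1⟩ : Fin h) = 2^j := by
        refine ⟨j', hjJ', by rw [hbeq', pair_apply_right hi01]⟩
      simp only [dif_pos hex, dif_pos hex'] at heq
      have hb1 : b (⟨1, h1⟩ : Fin h) = b' (⟨1, h1⟩ : Fin h) := by
        rw [hex.choose_spec.2, hex'.choose_spec.2, heq]
      have hjj' : (2:ℕ)^j = 2^j' := by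
        have e1 : b (⟨1, h1⟩ : Fin h) = 2^j := by rw [hbeq, pair_apply_right hi01]
        have e2 : b' (⟨1, h1⟩ : Fin h) = 2^j' := by rw [hbeq', pair_apply_right hi01]
        rw [← e1, ← e2, hb1]
      have : j = j' := Nat.pow_right_injective (le_refl 2) hjj'
      rw [hbeq, hbeq', this]
  refine le_antisymm ?_ ?_
  · refine limsup_le_of_le ?_ ?_
    · isBoundedDefault
    · refine Eventually.of_forall (fun n => ?_)
      show ((repSet (BJ h (Set.Iio t)) n).ncard : ℕ∞) ≤ (t:ℕ∞)
      exact_mod_cast hup n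
  · refine le_limsup_of_frequently_le ?_ ?_
    · rw [frequently_atTop]
      intro a
      refine ⟨2^(t-1) * (a+1), ?_, ?_⟩
      · calc a ≤ a + 1 := by omega
          _ ≤ 2^(t-1) * (a+1) := Nat.le_mul_of_pos_left _ (Nat.pow_pos (by omega))
      · show (t:ℕ∞) ≤ ((repSet (BJ h (Set.Iio t)) (2^(t-1) * (a+1))).ncard : ℕ∞)
        have hn : 0 < 2^(t-1) * (a+1) := Nat.mul_pos (Nat.pow_pos (by omega)) (by omega)
        have hlo : t ≤ (repSet (BJ h (Set.Iio t)) (2^(t-1) * (a+1))).ncard := by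
          have hi01 := fin01_ne h1
          refine le_ncard_of_inj (repSet_finite _ (BJ_pos (h := h) (J := Set.Iio t)) _)
            (fun j : Fin t => pair (⟨0, by omega⟩ : Fin h) (⟨1, h1⟩ : Fin h)
              ((2^(t-1) * (a+1)) / 2^(j:ℕ)) (2^(j:ℕ))) (fun j => ?_) ?_
          · refine BJ_pair_mem hJ0 h1 hn (by simpa using j.2) ?_
            exact dvd_mul_of_dvd_left (pow_dvd_pow 2 (by have := j.2; omega)) _
          · intro j j' hjj
            have hval : pair (⟨0, by omega⟩ : Fin h) (⟨1, h1⟩ : Fin h)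
                ((2^(t-1) * (a+1)) / 2^(j:ℕ)) (2^(j:ℕ)) (⟨1, h1⟩ : Fin h) =
                pair (⟨0, by omega⟩ : Fin h) (⟨1, h1⟩ : Fin h)
                ((2^(t-1) * (a+1)) / 2^(j':ℕ)) (2^(j':ℕ)) (⟨1, h1⟩ : Fin h) := congrFun hjj _
            rw [pair_apply_right hi01, pair_apply_right hi01] at hval
            exact Fin.ext (Nat.pow_right_injective (le_refl 2) hval)
        exact_mod_cast hlo
    · isBoundedDefault

lemma constructionC (hh : 2 ≤ h) :
    ∃ B : Fin h → Set ℕ, (∀ i, ∀ b ∈ B i, 0 < b) ∧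
      (∃ N : ℕ, ∀ n, N ≤ n → 1 ≤ (repSet B n).ncard) ∧
      liminf (fun n : ℕ => ((repSet B n).ncard : ℕ∞)) atTop = 1 ∧
      limsup (fun n : ℕ => ((repSet B n).ncard : ℕ∞)) atTop = ⊤ := by
  classical
  have h1 : 1 < h := by omega
  have hJ0 : (0:ℕ) ∈ (Set.univ : Set ℕ) := Set.mem_univ 0
  refine ⟨BJ h Set.univ, BJ_pos, ⟨1, fun n hn => BJ_low hJ0 h1 hn⟩, BJ_liminf hJ0 h1, ?_⟩
  refine limsup_top_of_unbounded (fun M => ?_)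
  rw [frequently_atTop]
  intro a
  refine ⟨2^(max M a), le_trans (le_max_right M a) (Nat.le_of_lt (Nat.lt_two_pow_self)), ?_⟩
  show (M:ℕ∞) ≤ ((repSet (BJ h Set.univ) (2^(max M a))).ncard : ℕ∞)
  have hi01 := fin01_ne h1
  have hlo : max M a + 1 ≤ (repSet (BJ h Set.univ) (2^(max M a))).ncard := by
    refine le_ncard_of_inj (repSet_finite _ (BJ_pos (h := h) (J := Set.univ)) _)
      (fun j : Fin (max M a + 1) => pair (⟨0, by omega⟩ : Fin h) (⟨1, h1⟩ : Fin h)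
        ((2^(max M a)) / 2^(j:ℕ)) (2^(j:ℕ))) (fun j => ?_) ?_
    · refine BJ_pair_mem hJ0 h1 (Nat.pow_pos (by omega)) (Set.mem_univ _) ?_
      exact pow_dvd_pow 2 (by have := j.2; omega)
    · intro j j' hjj
      have hval : pair (⟨0, by omega⟩ : Fin h) (⟨1, h1⟩ : Fin h)
          ((2^(max M a)) / 2^(j:ℕ)) (2^(j:ℕ)) (⟨1, h1⟩ : Fin h) =
          pair (⟨0, by omega⟩ : Fin h) (⟨1, h1⟩ : Fin h)
          ((2^(max M a)) / 2^(j':ℕ)) (2^(j':ℕ)) (⟨1, h1⟩ : Fin h) := congrFun hjj _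
      rw [pair_apply_right hi01, pair_apply_right hi01] at hval
      exact Fin.ext (Nat.pow_right_injective (le_refl 2) hval)
  have hM : M ≤ (repSet (BJ h Set.univ) (2^(max M a))).ncard := by
    have := le_max_left M a
    omega
  exact_mod_cast hM

end
end Nath

open Filter

/-- Nathanson's theorem: for `h ≥ 2`, the set of pairs
`(liminf g_𝓑, limsup g_𝓑)` (computed in `ℕ∞`) over all asymptotic multiplicative
systems `𝓑 = (B 1, …, B h)` of order `h` equals
`{(1,t) : t ∈ ℕ ∪ {∞}} ∪ {(s,∞) : 2 ≤ s ≤ h}`. -/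
theorem nathanson_multiplicative_systems (h : ℕ) (hh : 2 ≤ h) :
    {p : ℕ∞ × ℕ∞ | ∃ B : Fin h → Set ℕ,
      (∀ i, ∀ b ∈ B i, 0 < b) ∧
      (∃ N : ℕ, ∀ n : ℕ, N ≤ n →
        1 ≤ {b : Fin h → ℕ | (∀ i, b i ∈ B i) ∧ ∏ i, b i = n}.ncard) ∧
      p.1 = liminf (fun n : ℕ =>
        ({b : Fin h → ℕ | (∀ i, b i ∈ B i) ∧ ∏ i, b i = n}.ncard : ℕ∞)) atTop ∧
      p.2 = limsup (fun n : ℕ =>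
        ({b : Fin h → ℕ | (∀ i, b i ∈ B i) ∧ ∏ i, b i = n}.ncard : ℕ∞)) atTop} =
    {p : ℕ∞ × ℕ∞ |
      (p.1 = 1 ∧ ((∃ t : ℕ, 0 < t ∧ p.2 = t) ∨ p.2 = ⊤)) ∨
      (∃ s : ℕ, 2 ≤ s ∧ s ≤ h ∧ p.1 = s ∧ p.2 = ⊤)} := by
  ext p
  simp only [Set.mem_setOf_eq]
  constructor
  · rintro ⟨B, hpos, ⟨N, hN⟩, hp1, hp2⟩
    have hN' : ∀ n, N ≤ n → 1 ≤ (Nath.repSet B n).ncard := hN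
    have hfwd := Nath.forward hh B hpos N hN'
    have hp1' : p.1 = liminf (fun n : ℕ => ((Nath.repSet B n).ncard : ℕ∞)) atTop := hp1
    have hp2' : p.2 = limsup (fun n : ℕ => ((Nath.repSet B n).ncard : ℕ∞)) atTop := hp2
    rcases hfwd with ⟨hL, hU⟩ | ⟨s, hs1, hs2, hL, hU⟩
    · left
      refine ⟨by rw [hp1', hL], ?_⟩
      rcases hU with ⟨t, ht, hUt⟩ | hUt
      · exact Or.inl ⟨t, ht, by rw [hp2', hUt]⟩
      · exact Or.inr (by rw [hp2', hUt])
    · right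
      exact ⟨s, hs1, hs2, by rw [hp1', hL], by rw [hp2', hU]⟩
  · rintro (⟨hp1, (⟨t, ht, hp2⟩ | hp2)⟩ | ⟨s, hs1, hs2, hp1, hp2⟩)
    · obtain ⟨B, hpos, hN, hli, hls⟩ := Nath.constructionB hh t ht
      exact ⟨B, hpos, hN, by rw [hp1, ← hli]; rfl, by rw [hp2, ← hls]; rfl⟩
    · obtain ⟨B, hpos, hN, hli, hls⟩ := Nath.constructionC hh
      exact ⟨B, hpos, hN, by rw [hp1, ← hli]; rfl, by rw [hp2, ← hls]; rfl⟩
    · obtain ⟨B, hpos, hN, hli, hls⟩ := Nath.constructionA hh s hs1 hs2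
      exact ⟨B, hpos, hN, by rw [hp1, ← hli]; rfl, by rw [hp2, ← hls]; rfl⟩
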